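/- Let n₀ > 0, ρ > 0 and define for f ∈ ℂ^N the map ∇_f G(f) = (ρ/(2n₀)) G₀′(‖f‖²/(2n₀)) f, where G₀′(z) = 2 max(z−1, 0). Then for any f, f̃ ∈ ℂ^N with ‖f‖ ≤ 2√n₀ and ‖f̃‖ ≤ 2√n₀, we have ‖∇_f G(f̃) − ∇_f G(f)‖ ≤ (6ρ/n₀) ‖f̃ − f‖. -/

import Mathlib

theorem stmt10 {N : ℕ} (n₀ ρ : ℝ) (hn₀ : 0 < n₀) (hρ : 0 < ρ)
    (gradG : EuclideanSpace ℂ (Fin N) → EuclideanSpace ℂ (Fin N))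
    (hgradG : ∀ f, gradG f = ((ρ / (2 * n₀)) * (2 * max (‖f‖^2 / (2 * n₀) - 1) 0) : ℝ) • f)
    (f ft : EuclideanSpace ℂ (Fin N))
    (hf : ‖f‖ ≤ 2 * Real.sqrt n₀) (hft : ‖ft‖ ≤ 2 * Real.sqrt n₀) :
    ‖gradG ft - gradG f‖ ≤ (6 * ρ / n₀) * ‖ft - f‖ := by
  have hs : Real.sqrt n₀ ^ 2 = n₀ := Real.sq_sqrt hn₀.le
  have hs0 : 0 ≤ Real.sqrt n₀ := Real.sqrt_nonneg _
  set a : ℝ := (ρ / (2 * n₀)) * (2 * max (‖ft‖^2 / (2 * n₀) - 1) 0) with ha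
  set b : ℝ := (ρ / (2 * n₀)) * (2 * max (‖f‖^2 / (2 * n₀) - 1) 0) with hb
  have key : gradG ft - gradG f = a • (ft - f) + (a - b) • f := by
    rw [hgradG, hgradG, smul_sub, sub_smul]
    abel
  have hft2 : ‖ft‖^2 ≤ 4 * n₀ := by nlinarith [norm_nonneg ft]
  have hf2 : ‖f‖^2 ≤ 4 * n₀ := by nlinarith [norm_nonneg f]
  have haN : 0 ≤ a := by
    have : (0:ℝ) ≤ max (‖ft‖^2 / (2 * n₀) - 1) 0 := le_max_right _ _
    positivity
  have hale : a ≤ ρ / n₀ := by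
    have hm : max (‖ft‖^2 / (2 * n₀) - 1) 0 ≤ 1 := by
      apply max_le _ zero_le_one
      have h2 : ‖ft‖^2 / (2 * n₀) ≤ 2 := by
        rw [div_le_iff₀ (by positivity)]; linarith
      linarith
    calc a ≤ (ρ / (2 * n₀)) * (2 * 1) := by
          apply mul_le_mul_of_nonneg_left (by linarith) (by positivity)
      _ = ρ / n₀ := by field_simp
  have habs : |a - b| ≤ (ρ / n₀) * (|‖ft‖^2 - ‖f‖^2| / (2 * n₀)) := by
    have h1 : a - b = (ρ / n₀) * (max (‖ft‖^2 / (2 * n₀) - 1) 0 - max (‖f‖^2 / (2 * n₀) - 1) 0) := by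
      rw [ha, hb]; field_simp
    rw [h1, abs_mul, abs_of_pos (by positivity : (0:ℝ) < ρ / n₀)]
    apply mul_le_mul_of_nonneg_left _ (by positivity)
    calc |max (‖ft‖^2 / (2 * n₀) - 1) 0 - max (‖f‖^2 / (2 * n₀) - 1) 0|
        ≤ |(‖ft‖^2 / (2 * n₀) - 1) - (‖f‖^2 / (2 * n₀) - 1)| :=
          abs_max_sub_max_le_abs _ _ _
      _ = |‖ft‖^2 - ‖f‖^2| / (2 * n₀) := by
          have he : (‖ft‖^2 / (2 * n₀) - 1) - (‖f‖^2 / (2 * n₀) - 1)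
              = (‖ft‖^2 - ‖f‖^2) / (2 * n₀) := by field_simp; ring
          rw [he, abs_div, abs_of_pos (show (0:ℝ) < 2 * n₀ by positivity)]
  have hnormdiff : |‖ft‖^2 - ‖f‖^2| ≤ 4 * Real.sqrt n₀ * ‖ft - f‖ := by
    have h1 : |‖ft‖ - ‖f‖| ≤ ‖ft - f‖ := abs_norm_sub_norm_le _ _
    have h2 : |‖ft‖^2 - ‖f‖^2| = |‖ft‖ - ‖f‖| * (‖ft‖ + ‖f‖) := by
      rw [← abs_of_nonneg (show (0:ℝ) ≤ ‖ft‖ + ‖f‖ by positivity), ← abs_mul]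
      congr 1; ring
    rw [h2]
    have h3 : ‖ft‖ + ‖f‖ ≤ 4 * Real.sqrt n₀ := by linarith
    calc |‖ft‖ - ‖f‖| * (‖ft‖ + ‖f‖) ≤ ‖ft - f‖ * (4 * Real.sqrt n₀) := by
          apply mul_le_mul h1 h3 (by positivity) (norm_nonneg _)
      _ = 4 * Real.sqrt n₀ * ‖ft - f‖ := by ring
  calc ‖gradG ft - gradG f‖ ≤ ‖a • (ft - f)‖ + ‖(a - b) • f‖ := by
        rw [key]; exact norm_add_le _ _
    _ = |a| * ‖ft - f‖ + |a - b| * ‖f‖ := by rw [norm_smul, norm_smul, Real.norm_eq_abs, Real.norm_eq_abs]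
    _ ≤ (ρ / n₀) * ‖ft - f‖ + ((ρ / n₀) * ((4 * Real.sqrt n₀ * ‖ft - f‖) / (2 * n₀))) * (2 * Real.sqrt n₀) := by
        gcongr
        · rw [abs_of_nonneg haN]; exact hale
        · exact habs.trans (by gcongr)
    _ ≤ (6 * ρ / n₀) * ‖ft - f‖ := by
        have hn : n₀ ≠ 0 := hn₀.ne'
        have : (ρ / n₀) * ((4 * Real.sqrt n₀ * ‖ft - f‖) / (2 * n₀)) * (2 * Real.sqrt n₀)
            = (4 * ρ / n₀) * ‖ft - f‖ := by
          field_simp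
          linear_combination ‖ft - f‖ * hs
        rw [this]
        have e1 : ρ / n₀ * ‖ft - f‖ + 4 * ρ / n₀ * ‖ft - f‖
            = 5 * ((ρ * ‖ft - f‖) / n₀) := by ring
        have e2 : 6 * ρ / n₀ * ‖ft - f‖ = 6 * ((ρ * ‖ft - f‖) / n₀) := by ring
        have hx : (0:ℝ) ≤ (ρ * ‖ft - f‖) / n₀ := by positivity
        rw [e1, e2]; linarith
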